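/- Let n ≥ 3 and let a ∈ A_n be doubly pure. Then (ã, x, a) = 0 for every x ∈ H_a, and (ã, x, a) = −2·a·(a·x̃) for every x ∈ H_a^⊥. -/

import Mathlib

noncomputable section

open scoped Quaternion

/-- The Cayley–Dickson algebra `A n = ℝ^(2^n)` as a type. -/
def CD : ℕ → Type
  | 0 => ℝ
  | n + 1 => CD n × CD n

namespace CD

instance instAddCommGroup : (n : ℕ) → AddCommGroup (CD n)
  | 0 => inferInstanceAs (AddCommGroup ℝ)
  | n + 1 =>
    letI := instAddCommGroup n
    inferInstanceAs (AddCommGroup (CD n × CD n))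

instance instModule : (n : ℕ) → Module ℝ (CD n)
  | 0 => inferInstanceAs (Module ℝ ℝ)
  | n + 1 =>
    letI := instModule n
    inferInstanceAs (Module ℝ (CD n × CD n))

/-- Conjugation in the Cayley–Dickson algebra. -/
def conj : {n : ℕ} → CD n → CD n
  | 0, x => x
  | _ + 1, x => (conj x.1, -x.2)

/-- Cayley–Dickson multiplication. -/
def mul : {n : ℕ} → CD n → CD n → CD n
  | 0, x, y => Mul.mul (α := ℝ) x y
  | _ + 1, x, y =>
    (mul x.1 y.1 - mul (conj y.2) x.2, mul y.2 x.1 + mul x.2 (conj y.1))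

instance instMul (n : ℕ) : Mul (CD n) := ⟨mul⟩

/-- The multiplicative unit `e₀`. -/
def one : {n : ℕ} → CD n
  | 0 => (1 : ℝ)
  | _ + 1 => (one, 0)

instance instOne (n : ℕ) : One (CD n) := ⟨one⟩

/-- The Euclidean inner product on `A n = ℝ^(2^n)`. -/
def inner : {n : ℕ} → CD n → CD n → ℝ
  | 0, x, y => (x * y : ℝ)
  | _ + 1, x, y => inner x.1 y.1 + inner x.2 y.2

/-- The Euclidean norm on `A n = ℝ^(2^n)`. -/
def norm {n : ℕ} (x : CD n) : ℝ := Real.sqrt (inner x x)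

/-- `ã = (-a₂, a₁)`. -/
def tilde {n : ℕ} (a : CD (n + 1)) : CD (n + 1) := (-a.2, a.1)

/-- `ẽ₀ = (0, e₀)`. -/
def etilde (n : ℕ) : CD (n + 1) := ((0 : CD n), (1 : CD n))

/-- An element is pure if its conjugate is its negative. -/
def IsPure {n : ℕ} (a : CD n) : Prop := conj a = -a

/-- An element of `A (n+1)` is doubly pure if both of its coordinates are pure. -/
def IsDoublyPure {n : ℕ} (a : CD (n + 1)) : Prop := IsPure a.1 ∧ IsPure a.2

/-- The associator `(a,b,c) = (ab)c - a(bc)`. -/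
def assoc {n : ℕ} (a b c : CD n) : CD n := a * b * c - a * (b * c)

/-- An element is alternative if `(a,a,x) = 0` for all `x`. -/
def IsAlternative {n : ℕ} (a : CD n) : Prop := ∀ x : CD n, assoc a a x = 0

/-- An element is strongly alternative if `(a,a,x) = 0` and `(a,x,x) = 0` for all `x`. -/
def IsStronglyAlternative {n : ℕ} (a : CD n) : Prop :=
  (∀ x : CD n, assoc a a x = 0) ∧ (∀ x : CD n, assoc a x x = 0)

/-- The pure (imaginary) part of an element. -/
def im {n : ℕ} (a : CD n) : CD n := (2⁻¹ : ℝ) • (a - conj a)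

/-- `H a`, the span of `{e₀, ã, a, ẽ₀}`. -/
def H {n : ℕ} (a : CD (n + 1)) : Submodule ℝ (CD (n + 1)) :=
  Submodule.span ℝ {(1 : CD (n + 1)), tilde a, a, etilde n}

/-- The orthogonal complement of `H a`. -/
def Hperp {n : ℕ} (a : CD (n + 1)) : Set (CD (n + 1)) :=
  {x | ∀ y ∈ H a, inner y x = 0}

end CD

namespace CD

variable {n : ℕ}

@[simp] lemma fst_add (x y : CD (n+1)) : (x + y).1 = x.1 + y.1 := rfl
@[simp] lemma snd_add (x y : CD (n+1)) : (x + y).2 = x.2 + y.2 := rfl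
@[simp] lemma fst_neg (x : CD (n+1)) : (-x).1 = -x.1 := rfl
@[simp] lemma snd_neg (x : CD (n+1)) : (-x).2 = -x.2 := rfl
@[simp] lemma fst_sub (x y : CD (n+1)) : (x - y).1 = x.1 - y.1 := rfl
@[simp] lemma snd_sub (x y : CD (n+1)) : (x - y).2 = x.2 - y.2 := rfl
@[simp] lemma fst_smul (r : ℝ) (x : CD (n+1)) : (r • x).1 = r • x.1 := rfl
@[simp] lemma snd_smul (r : ℝ) (x : CD (n+1)) : (r • x).2 = r • x.2 := rfl
@[simp] lemma fst_zero : (0 : CD (n+1)).1 = 0 := rfl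
@[simp] lemma snd_zero : (0 : CD (n+1)).2 = 0 := rfl
@[simp] lemma fst_one : (1 : CD (n+1)).1 = 1 := rfl
@[simp] lemma snd_one : (1 : CD (n+1)).2 = 0 := rfl

lemma mk_eq (x : CD (n+1)) : x = (x.1, x.2) := rfl

abbrev mk (a b : CD n) : CD (n+1) := (a, b)

lemma mul_def (x y : CD (n+1)) :
    x * y = mk (x.1 * y.1 - conj y.2 * x.2) (y.2 * x.1 + x.2 * conj y.1) := rfl

lemma conj_def (x : CD (n+1)) : conj x = mk (conj x.1) (-x.2) := rfl

lemma inner_def (x y : CD (n+1)) : inner x y = inner x.1 y.1 + inner x.2 y.2 := rfl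


-- base level
lemma mul_zero_def (x y : CD 0) : x * y = (Mul.mul (α := ℝ) x y) := rfl
lemma conj_zero_def (x : CD 0) : conj x = x := rfl
lemma inner_zero_def (x y : CD 0) : inner x y = Mul.mul (α := ℝ) x y := rfl
lemma one_zero_def : (1 : CD 0) = (1 : ℝ) := rfl

end CD
namespace CD
set_option linter.dupNamespace false

variable {n : ℕ}

lemma conj_add : ∀ {n : ℕ} (x y : CD n), conj (x + y) = conj x + conj y
  | 0, x, y => rfl
  | n + 1, x, y => by
    apply Prod.ext <;> simp [conj_def, conj_add x.1 y.1] <;> abel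

private lemma distribs : ∀ n : ℕ, (∀ x y z : CD n, (x + y) * z = x * z + y * z) ∧
    (∀ x y z : CD n, x * (y + z) = x * y + x * z)
  | 0 => ⟨fun x y z => @add_mul ℝ _ _ _ x y z, fun x y z => @mul_add ℝ _ _ _ x y z⟩
  | n + 1 => by
    obtain ⟨ha, hm⟩ := distribs n
    constructor <;> intro x y z <;>
      · apply Prod.ext <;>
        simp [mul_def, conj_add, ha, hm] <;> abel

lemma add_mul' (x y z : CD n) : (x + y) * z = x * z + y * z := (distribs n).1 x y z
lemma mul_add' (x y z : CD n) : x * (y + z) = x * y + x * z := (distribs n).2 x y z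

lemma zero_mul' (x : CD n) : (0 : CD n) * x = 0 := by
  have := add_mul' (0 : CD n) 0 x
  rw [add_zero] at this
  exact left_eq_add.mp this

lemma mul_zero' (x : CD n) : x * (0 : CD n) = 0 := by
  have := mul_add' x (0 : CD n) 0
  rw [add_zero] at this
  exact left_eq_add.mp this

lemma neg_mul' (x y : CD n) : (-x) * y = -(x * y) := by
  have := add_mul' x (-x) y
  rw [add_neg_cancel, zero_mul'] at this
  exact eq_neg_of_add_eq_zero_right this.symm

lemma mul_neg' (x y : CD n) : x * (-y) = -(x * y) := by
  have := mul_add' x y (-y)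
  rw [add_neg_cancel, mul_zero'] at this
  exact eq_neg_of_add_eq_zero_right this.symm

lemma sub_mul' (x y z : CD n) : (x - y) * z = x * z - y * z := by
  rw [sub_eq_add_neg, add_mul', neg_mul', sub_eq_add_neg]

lemma mul_sub' (x y z : CD n) : x * (y - z) = x * y - x * z := by
  rw [sub_eq_add_neg, mul_add', mul_neg', sub_eq_add_neg]

end CD
namespace CD
set_option linter.dupNamespace false
variable {n : ℕ}

lemma conj_smul : ∀ {n : ℕ} (r : ℝ) (x : CD n), conj (r • x) = r • conj x
  | 0, r, x => rfl
  | n + 1, r, x => by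
    apply Prod.ext <;> simp [conj_def, conj_smul r x.1]

lemma conj_neg : ∀ {n : ℕ} (x : CD n), conj (-x) = -conj x
  | 0, x => rfl
  | n + 1, x => by
    apply Prod.ext <;> simp [conj_def, conj_neg x.1]

lemma conj_conj : ∀ {n : ℕ} (x : CD n), conj (conj x) = x
  | 0, x => rfl
  | n + 1, x => by
    apply Prod.ext <;> simp [conj_def, conj_conj x.1]

lemma conj_zero : ∀ {n : ℕ}, conj (0 : CD n) = 0
  | 0 => rfl
  | n + 1 => by
    apply Prod.ext <;> simp [conj_def, conj_zero]

lemma conj_one : ∀ {n : ℕ}, conj (1 : CD n) = 1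
  | 0 => rfl
  | n + 1 => by
    apply Prod.ext <;> simp [conj_def, conj_one]

lemma conj_sub (x y : CD n) : conj (x - y) = conj x - conj y := by
  rw [sub_eq_add_neg, conj_add, conj_neg, sub_eq_add_neg]

private lemma smuls : ∀ n : ℕ, (∀ (r : ℝ) (x y : CD n), (r • x) * y = r • (x * y)) ∧
    (∀ (r : ℝ) (x y : CD n), x * (r • y) = r • (x * y))
  | 0 => by
    constructor <;> intro r x y
    · have h := smul_mul_assoc r (show ℝ from x) (show ℝ from y); exact h
    · have h := mul_smul_comm r (show ℝ from x) (show ℝ from y); exact h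
  | n + 1 => by
    obtain ⟨hl, hr⟩ := smuls n
    constructor <;> intro r x y <;>
      · apply Prod.ext <;> simp [mul_def, conj_smul, hl, hr, smul_sub, smul_add]

lemma smul_mul' (r : ℝ) (x y : CD n) : (r • x) * y = r • (x * y) := (smuls n).1 r x y
lemma mul_smul' (r : ℝ) (x y : CD n) : x * (r • y) = r • (x * y) := (smuls n).2 r x y

private lemma ones : ∀ n : ℕ, (∀ x : CD n, (1 : CD n) * x = x) ∧ (∀ x : CD n, x * (1 : CD n) = x)
  | 0 => ⟨fun x => @one_mul ℝ _ x, fun x => @mul_one ℝ _ x⟩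
  | n + 1 => by
    obtain ⟨hl, hr⟩ := ones n
    constructor <;> intro x <;>
      · apply Prod.ext <;>
        simp [mul_def, conj_zero, conj_one, hl, hr, zero_mul', mul_zero']

lemma one_mul' (x : CD n) : (1 : CD n) * x = x := (ones n).1 x
lemma mul_one' (x : CD n) : x * (1 : CD n) = x := (ones n).2 x

lemma conj_mul : ∀ {n : ℕ} (x y : CD n), conj (x * y) = conj y * conj x
  | 0, x, y => @mul_comm ℝ _ x y
  | n + 1, x, y => by
    apply Prod.ext <;>
      simp [mul_def, conj_def, conj_sub, conj_add, conj_neg, conj_conj,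
        conj_mul x.1 y.1, conj_mul (conj y.2) x.2, conj_mul y.2 x.1, conj_mul x.2 (conj y.1),
        neg_mul', mul_neg'] <;> abel

end CD
namespace CD
set_option linter.dupNamespace false
variable {n : ℕ}

lemma inner_symm : ∀ {n : ℕ} (x y : CD n), inner x y = inner y x
  | 0, x, y => @mul_comm ℝ _ x y
  | n + 1, x, y => by
    simp [inner_def, inner_symm x.1 y.1, inner_symm x.2 y.2]

lemma inner_add_left : ∀ {n : ℕ} (x y z : CD n), inner (x + y) z = inner x z + inner y z
  | 0, x, y, z => by have h := add_mul (show ℝ from x) (show ℝ from y) (show ℝ from z); exact h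
  | n + 1, x, y, z => by
    simp [inner_def, inner_add_left x.1 y.1 z.1, inner_add_left x.2 y.2 z.2]; ring

lemma inner_add_right (x y z : CD n) : inner x (y + z) = inner x y + inner x z := by
  rw [inner_symm, inner_add_left, inner_symm y x, inner_symm z x]

lemma inner_smul_left : ∀ {n : ℕ} (r : ℝ) (x y : CD n), inner (r • x) y = r * inner x y
  | 0, r, x, y => by
    have h : ∀ a b : ℝ, (r • a) * b = r * (a * b) := by
      intro a b; rw [smul_eq_mul]; ring
    exact h (show ℝ from x) (show ℝ from y)
  | n + 1, r, x, y => by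
    simp [inner_def, inner_smul_left r x.1 y.1, inner_smul_left r x.2 y.2]; ring

lemma inner_smul_right (r : ℝ) (x y : CD n) : inner x (r • y) = r * inner x y := by
  rw [inner_symm, inner_smul_left, inner_symm y x]

lemma inner_neg_left (x y : CD n) : inner (-x) y = -inner x y := by
  have := inner_add_left x (-x) y
  rw [add_neg_cancel] at this
  have h0 : inner (0 : CD n) y = 0 := by
    have := inner_smul_left 0 (0 : CD n) y
    simpa using this
  rw [h0] at this
  linarith

lemma inner_neg_right (x y : CD n) : inner x (-y) = -inner x y := by
  rw [inner_symm, inner_neg_left, inner_symm y x]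

lemma inner_zero_left (y : CD n) : inner (0 : CD n) y = 0 := by
  have := inner_smul_left 0 (0 : CD n) y
  simpa using this

lemma inner_zero_right (y : CD n) : inner y (0 : CD n) = 0 := by
  rw [inner_symm, inner_zero_left]

lemma inner_sub_left (x y z : CD n) : inner (x - y) z = inner x z - inner y z := by
  rw [sub_eq_add_neg, inner_add_left, inner_neg_left]; ring

lemma inner_sub_right (x y z : CD n) : inner x (y - z) = inner x y - inner x z := by
  rw [inner_symm, inner_sub_left, inner_symm y x, inner_symm z x]

lemma inner_conj_conj : ∀ {n : ℕ} (x y : CD n), inner (conj x) (conj y) = inner x y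
  | 0, x, y => rfl
  | n + 1, x, y => by
    simp [inner_def, conj_def, inner_conj_conj x.1 y.1, inner_neg_left, inner_neg_right]

/-- `x + conj x = 2⟨x,1⟩ • 1`. -/
lemma add_conj : ∀ {n : ℕ} (x : CD n), x + conj x = (2 * inner x 1) • (1 : CD n)
  | 0, x => by
    have h : ∀ t : ℝ, t + t = (2 * (t * 1)) • (1 : ℝ) := by intro t; simp; ring
    exact h (show ℝ from x)
  | n + 1, x => by
    apply Prod.ext
    · have h := add_conj x.1
      simpa [conj_def, inner_def, inner_zero_left, inner_zero_right] using h
    · simp [conj_def, inner_def]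

end CD
namespace CD
set_option linter.dupNamespace false
variable {n : ℕ}

lemma adj : ∀ {n : ℕ} (x y z : CD n),
    inner (x * y) z = inner y (conj x * z) ∧ inner (x * y) z = inner x (z * conj y)
  | 0, x, y, z => by
    have h : ∀ a b c : ℝ, ((a * b) * c = b * (a * c)) ∧ ((a * b) * c = a * (c * b)) := by
      intro a b c; constructor <;> ring
    exact h (show ℝ from x) (show ℝ from y) (show ℝ from z)
  | n + 1, x, y, z => by
    have I1 : ∀ a b c : CD n, inner (a * b) c = inner b (conj a * c) :=
      fun a b c => (adj a b c).1
    have I2 : ∀ a b c : CD n, inner (a * b) c = inner a (c * conj b) :=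
      fun a b c => (adj a b c).2
    have e2 : inner (conj y.2 * x.2) z.1 = inner x.2 (y.2 * z.1) := by
      rw [I1, conj_conj]
    have e4 : inner (x.2 * conj y.1) z.2 = inner x.2 (z.2 * y.1) := by
      rw [I2, conj_conj]
    have e5 : inner (conj z.2 * x.2) y.1 = inner x.2 (z.2 * y.1) := by
      rw [I1, conj_conj]
    have e6 : inner (x.2 * conj z.1) y.2 = inner x.2 (y.2 * z.1) := by
      rw [I2, conj_conj]
    constructor
    · simp only [mul_def, conj_def, inner_def, inner_sub_left, inner_add_left,
        inner_add_right, inner_neg_left, inner_neg_right, neg_mul', mul_neg',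
        inner_sub_right, conj_neg, conj_conj]
      linear_combination I1 x.1 y.1 z.1 - e2 + I2 y.2 x.1 z.2 + e4 - e5 -
        inner_symm y.1 (conj z.2 * x.2) + e6 + inner_symm y.2 (x.2 * conj z.1)
    · simp only [mul_def, conj_def, inner_def, inner_sub_left, inner_add_left,
        inner_add_right, inner_neg_left, inner_neg_right, neg_mul', mul_neg',
        inner_sub_right, conj_neg, conj_conj]
      linear_combination I2 x.1 y.1 z.1 - e2 + I1 y.2 x.1 z.2 + e4

lemma inner_mul_left (x y z : CD n) : inner (x * y) z = inner y (conj x * z) := (adj x y z).1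
lemma inner_mul_right (x y z : CD n) : inner (x * y) z = inner x (z * conj y) := (adj x y z).2

lemma inner_mul_one (x y : CD n) : inner (x * y) 1 = inner x (conj y) := by
  rw [inner_mul_right, one_mul']

/-- Polarization: `x * conj y + y * conj x = 2⟨x,y⟩ • 1`. -/
lemma polar (x y : CD n) : x * conj y + y * conj x = (2 * inner x y) • (1 : CD n) := by
  have h := add_conj (x * conj y)
  rw [conj_mul, conj_conj, inner_mul_one, conj_conj] at h
  exact h

end CD
namespace CD
set_option linter.dupNamespace false
variable {n : ℕ}

lemma inner_one_one : ∀ {n : ℕ}, inner (1 : CD n) 1 = 1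
  | 0 => mul_one 1
  | n + 1 => by simp [inner_def, inner_one_one, inner_zero_left]

lemma conj_eq (x : CD n) : conj x = (2 * inner x 1) • (1 : CD n) - x := by
  have h := add_conj x
  linear_combination (norm := module) h

lemma conj_eq_neg_of_inner_one {x : CD n} (h : inner x 1 = 0) : conj x = -x := by
  rw [conj_eq, h]
  module

lemma inner_one_of_pure {p : CD n} (hp : conj p = -p) : inner p 1 = 0 := by
  have h := add_conj p
  rw [hp, add_neg_cancel] at h
  have h2 := congrArg (fun z => inner z (1 : CD n)) h.symm
  simp only [inner_zero_left, inner_smul_left, inner_one_one, mul_one] at h2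
  linarith

lemma mul_conj_self (x : CD n) : x * conj x = (inner x x) • (1 : CD n) := by
  have h := polar x x
  have h2 : (2 : ℝ) • (x * conj x) = (2 * inner x x) • (1 : CD n) := by
    rw [two_smul]; exact h
  have := congrArg (fun z => (2⁻¹ : ℝ) • z) h2
  simpa [smul_smul] using this

lemma pure_sq {p : CD n} (hp : conj p = -p) : p * p = -((inner p p) • (1 : CD n)) := by
  have h := mul_conj_self p
  rw [hp, mul_neg'] at h
  linear_combination (norm := module) -h

/-- Key anticommutation rule: move a pure element to the left. -/
lemma comm_pure {p : CD n} (hp : conj p = -p) (v : CD n) :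
    v * p = (2 * inner v 1) • p - (2 * inner p v) • (1 : CD n) - p * v := by
  have h := polar p v
  rw [hp, mul_neg', conj_eq v, mul_sub', mul_smul', mul_one'] at h
  linear_combination (norm := module) -h

lemma inner_pure_mul_self {p : CD n} (hp : conj p = -p) (w : CD n) :
    inner p (p * w) = inner p p * inner w 1 := by
  rw [inner_symm, inner_mul_left, hp, neg_mul', pure_sq hp, neg_neg, inner_smul_right]

lemma inner_pure_swap {p q : CD n} (hp : conj p = -p) (hq : conj q = -q) (w : CD n) :
    inner q (p * w) = 2 * inner p q * inner w 1 - inner p (q * w) := by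
  have hpq : p * q + q * p = -((2 * inner p q) • (1 : CD n)) := by
    have h := polar p q
    rw [hp, hq, mul_neg', mul_neg'] at h
    linear_combination (norm := module) -h
  have h1 : inner q (p * w) = -inner w (p * q) := by
    rw [inner_symm, inner_mul_left, hp, neg_mul', inner_neg_right]
  have h2 : inner p (q * w) = -inner w (q * p) := by
    rw [inner_symm, inner_mul_left, hq, neg_mul', inner_neg_right]
  have h3 := congrArg (inner w) hpq
  rw [inner_add_right, inner_neg_right, inner_smul_right] at h3
  linear_combination h1 + h2 - h3

end CD
namespace CD
set_option linter.dupNamespace false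
variable {n : ℕ}

@[simp] lemma tilde_fst (x : CD (n+1)) : (tilde x).1 = -x.2 := rfl
@[simp] lemma tilde_snd (x : CD (n+1)) : (tilde x).2 = x.1 := rfl
@[simp] lemma etilde_fst : (etilde n).1 = 0 := rfl
@[simp] lemma etilde_snd : (etilde n).2 = 1 := rfl

lemma tilde_tilde (x : CD (n+1)) : tilde (tilde x) = -x := by
  apply Prod.ext <;> simp

lemma etilde_mul (x : CD (n+1)) : x * etilde n = tilde x := by
  apply Prod.ext <;>
    simp [mul_def, conj_one, conj_zero, mul_zero', zero_mul', mul_one', one_mul']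

lemma pureA {a : CD (n+1)} (ha : IsDoublyPure a) : conj a = -a := by
  have hp1 : conj a.1 = -a.1 := ha.1
  apply Prod.ext <;> simp [conj_def, hp1]

lemma pure_tilde {a : CD (n+1)} (ha : IsDoublyPure a) : conj (tilde a) = -(tilde a) := by
  have hp1 : conj a.1 = -a.1 := ha.1
  have hp2 : conj a.2 = -a.2 := ha.2
  apply Prod.ext <;> simp [conj_def, conj_neg, hp1, hp2]

lemma etilde_mul_left {x : CD (n+1)} (hx : IsDoublyPure x) : etilde n * x = -tilde x := by
  have hp1 : conj x.1 = -x.1 := hx.1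
  have hp2 : conj x.2 = -x.2 := hx.2
  apply Prod.ext <;>
    simp [mul_def, conj_one, conj_zero, mul_zero', zero_mul', mul_one', one_mul', hp1, hp2]

lemma inner_tilde_tilde (x : CD (n+1)) : inner (tilde x) (tilde x) = inner x x := by
  simp [inner_def, inner_neg_left, inner_neg_right]; ring

lemma tilde_mul_self {a : CD (n+1)} (ha : IsDoublyPure a) :
    tilde a * a = (inner a a) • etilde n := by
  have hp1 : conj a.1 = -a.1 := ha.1
  have hp2 : conj a.2 = -a.2 := ha.2
  apply Prod.ext
  · simp [mul_def, hp1, hp2, neg_mul', mul_neg']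
  · simp [mul_def, hp1, hp2, neg_mul', mul_neg', pure_sq hp1, pure_sq hp2,
      inner_def, add_smul]
    module

lemma assoc_middle_add (t c x y : CD (n+1)) :
    assoc t (x + y) c = assoc t x c + assoc t y c := by
  simp only [assoc, mul_add', add_mul']
  abel

lemma assoc_middle_smul (t c : CD (n+1)) (r : ℝ) (x : CD (n+1)) :
    assoc t (r • x) c = r • assoc t x c := by
  simp only [assoc, mul_smul', smul_mul', smul_sub]

lemma part1 {a : CD (n+1)} (ha : IsDoublyPure a) :
    ∀ x ∈ H a, assoc (tilde a) x a = 0 := by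
  intro x hx
  induction hx using Submodule.span_induction with
  | mem y hy =>
    have hA := pureA ha
    have hT := pure_tilde ha
    simp only [Set.mem_insert_iff, Set.mem_singleton_iff] at hy
    rcases hy with rfl | rfl | rfl | rfl
    · simp [assoc, one_mul', mul_one', sub_self]
    · simp only [assoc, tilde_mul_self ha, mul_smul', smul_mul', etilde_mul,
        etilde_mul_left ha, tilde_tilde, mul_neg', neg_mul', pure_sq hA, pure_sq hT,
        inner_tilde_tilde, mul_one', one_mul']
      module
    · simp only [assoc, tilde_mul_self ha, mul_smul', smul_mul', etilde_mul,
        etilde_mul_left ha, tilde_tilde, mul_neg', neg_mul', pure_sq hA, pure_sq hT,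
        inner_tilde_tilde, mul_one', one_mul']
      module
    · simp only [assoc, tilde_mul_self ha, mul_smul', smul_mul', etilde_mul,
        etilde_mul_left ha, tilde_tilde, mul_neg', neg_mul', pure_sq hA, pure_sq hT,
        inner_tilde_tilde, mul_one', one_mul']
      module
  | zero => simp [assoc, mul_zero', zero_mul', sub_self]
  | add x y hx hy ihx ihy => rw [assoc_middle_add, ihx, ihy, add_zero]
  | smul r x hx ih => rw [assoc_middle_smul, ih, smul_zero]

end CD
namespace CD
set_option linter.dupNamespace false
variable {n : ℕ}

lemma part2 {a x : CD (n+1)} (ha : IsDoublyPure a) (hx : x ∈ Hperp a) :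
    assoc (tilde a) x a = -((2 : ℝ) • (a * (a * tilde x))) := by
  have hp1 : conj a.1 = -a.1 := ha.1
  have hp2 : conj a.2 = -a.2 := ha.2
  have h1 : inner (1 : CD (n+1)) x = 0 :=
    hx 1 (Submodule.subset_span (Set.mem_insert _ _))
  have hT : inner (tilde a) x = 0 :=
    hx (tilde a) (Submodule.subset_span (Set.mem_insert_of_mem _ (Set.mem_insert _ _)))
  have hA : inner a x = 0 :=
    hx a (Submodule.subset_span
      (Set.mem_insert_of_mem _ (Set.mem_insert_of_mem _ (Set.mem_insert _ _))))
  have hE : inner (etilde n) x = 0 :=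
    hx (etilde n) (Submodule.subset_span
      (Set.mem_insert_of_mem _ (Set.mem_insert_of_mem _
        (Set.mem_insert_of_mem _ rfl))))
  have e1 : inner x.1 1 = 0 := by
    rw [inner_symm]
    simpa [inner_def, inner_zero_left] using h1
  have e2 : inner x.2 1 = 0 := by
    rw [inner_symm]
    simpa [inner_def, inner_zero_left] using hE
  have hx1 : conj x.1 = -x.1 := conj_eq_neg_of_inner_one e1
  have hx2 : conj x.2 = -x.2 := conj_eq_neg_of_inner_one e2
  have f1 : inner a.2 x.2 = -inner a.1 x.1 := by
    have := hA
    rw [inner_def] at this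
    linarith
  have f2 : inner a.1 x.2 = inner a.2 x.1 := by
    have := hT
    rw [inner_def] at this
    simp only [tilde_fst, tilde_snd, inner_neg_left] at this
    linarith
  have g1 : inner a.1 1 = 0 := inner_one_of_pure hp1
  have g2 : inner a.2 1 = 0 := inner_one_of_pure hp2
  apply Prod.ext <;>
  · simp only [assoc, mul_def, conj_def, tilde_fst, tilde_snd, fst_sub, snd_sub,
      fst_neg, snd_neg, fst_smul, snd_smul,
      hp1, hp2, hx1, hx2, conj_neg, neg_neg,
      add_mul', mul_add', sub_mul', mul_sub', neg_mul', mul_neg', smul_mul', mul_smul',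
      comm_pure hp1, comm_pure hp2,
      inner_mul_one, inner_neg_right, inner_neg_left,
      inner_add_left, inner_add_right, inner_sub_left, inner_sub_right,
      inner_smul_left, inner_smul_right, inner_zero_left, inner_zero_right,
      inner_one_one, conj_add, conj_sub, conj_smul, conj_mul, conj_one, conj_zero,
      inner_pure_mul_self hp1, inner_pure_mul_self hp2,
      inner_pure_swap hp1 hp2,
      e1, e2, f1, f2, g1, g2,
      mul_one', one_mul', mul_zero', zero_mul',
      mul_zero, zero_mul, mul_neg, neg_zero, zero_smul, smul_zero, neg_smul, smul_neg,
      add_zero, zero_add, sub_zero, zero_sub, smul_smul]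
    module

end CD

/-- For `n ≥ 3` and doubly pure `a`: `(ã, x, a) = 0` for all `x ∈ H a`,
and `(ã, x, a) = −2·a·(a·x̃)` for all `x ∈ H a ^ ⊥`. -/
theorem assoc_tilde_left_of_mem_H_or_Hperp (n : ℕ) (hn : 3 ≤ n + 1) (a : CD (n + 1))
    (ha : CD.IsDoublyPure a) :
    (∀ x ∈ CD.H a, CD.assoc (CD.tilde a) x a = 0) ∧
    (∀ x ∈ CD.Hperp a,
      CD.assoc (CD.tilde a) x a = -((2 : ℝ) • (a * (a * CD.tilde x)))) :=
  ⟨fun x hx => CD.part1 ha x hx, fun x hx => CD.part2 ha hx⟩
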